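/- Let A be an n×n complex matrix and B an n×m complex matrix. Suppose x ∈ ℂ^n satisfies B* A*^i x = 0 for all natural numbers i (where M* denotes conjugate transpose), and assume that whenever a nonzero vector v satisfies A* v = λ v and B* v = 0 then λ = 0. Then A*^n x = 0. -/

import Mathlib

open Matrix Polynomial Module

set_option synthInstance.maxHeartbeats 1000000 in
theorem stmt3 {n m : ℕ} (A : Matrix (Fin n) (Fin n) ℂ) (B : Matrix (Fin n) (Fin m) ℂ)
    (x : Fin n → ℂ)
    (hx : ∀ i : ℕ, Bᴴ.mulVec ((Aᴴ ^ i).mulVec x) = 0)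
    (hautus : ∀ (v : Fin n → ℂ) (lam : ℂ), v ≠ 0 →
      Aᴴ.mulVec v = lam • v → Bᴴ.mulVec v = 0 → lam = 0) :
    (Aᴴ ^ n).mulVec x = 0 := by
  classical
  set f : (Fin n → ℂ) →ₗ[ℂ] (Fin n → ℂ) := Matrix.toLin' Aᴴ with hf
  have hfpow : ∀ i : ℕ, (f ^ i) x = (Aᴴ ^ i).mulVec x := by
    intro i
    induction i with
    | zero => simp [Matrix.one_mulVec]
    | succ k ih =>
        rw [pow_succ', Module.End.mul_apply, ih, hf, Matrix.toLin'_apply,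
          Matrix.mulVec_mulVec, ← pow_succ']
  set W : Submodule ℂ (Fin n → ℂ) :=
    Submodule.span ℂ (Set.range fun i : ℕ => (f ^ i) x) with hW
  have hxW : x ∈ W := by
    apply Submodule.subset_span
    exact ⟨0, by simp⟩
  have hinv : ∀ v ∈ W, f v ∈ W := by
    intro v hv
    induction hv using Submodule.span_induction with
    | mem v hv =>
        obtain ⟨i, rfl⟩ := hv
        apply Submodule.subset_span
        exact ⟨i + 1, by simp [pow_succ']⟩
    | zero => simp
    | add a b _ _ ha hb => rw [map_add]; exact W.add_mem ha hb
    | smul c a _ ha => rw [_root_.map_smul]; exact W.smul_mem c ha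
  have hBW : ∀ v ∈ W, Bᴴ.mulVec v = 0 := by
    intro v hv
    have : W ≤ LinearMap.ker (Matrix.toLin' Bᴴ) := by
      rw [hW, Submodule.span_le]
      rintro _ ⟨i, rfl⟩
      simp only [SetLike.mem_coe, LinearMap.mem_ker, Matrix.toLin'_apply, hfpow, hx]
    simpa [Matrix.toLin'_apply] using this hv
  set f' : Module.End ℂ W := f.restrict hinv with hf'
  -- all eigenvalues of f' are zero
  have heig : ∀ μ : ℂ, f'.HasEigenvalue μ → μ = 0 := by
    intro μ hμ
    obtain ⟨v, hv⟩ := hμ.exists_hasEigenvector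
    refine hautus v.1 μ ?_ ?_ (hBW v.1 v.2)
    · exact fun h => hv.right (Subtype.ext h)
    · have := congrArg Subtype.val hv.apply_eq_smul
      simpa [hf', LinearMap.restrict_apply, hf, Matrix.toLin'_apply] using this
  -- f' is nilpotent
  have hnil : IsNilpotent f' := by
    have hint : IsIntegral ℂ f' := Algebra.IsIntegral.isIntegral f'
    have hmon : (minpoly ℂ f').Monic := minpoly.monic hint
    have hsp : (minpoly ℂ f').Splits := IsAlgClosed.splits _
    have hroots : ∀ μ ∈ (minpoly ℂ f').roots, μ = 0 := by
      intro μ hμ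
      exact heig μ (Module.End.hasEigenvalue_of_isRoot (isRoot_of_mem_roots hμ))
    have heq : minpoly ℂ f' = X ^ (minpoly ℂ f').natDegree := by
      have hmc : (minpoly ℂ f').roots.map (fun a => X - C a)
          = (minpoly ℂ f').roots.map (fun _ => (X : Polynomial ℂ)) :=
        Multiset.map_congr rfl (fun μ hμ => by rw [hroots μ hμ, map_zero, sub_zero])
      conv_lhs => rw [hsp.eq_prod_roots_of_monic hmon]
      rw [hmc, Multiset.map_const', Multiset.prod_replicate,
        (splits_iff_card_roots).mp hsp]
    exact ⟨(minpoly ℂ f').natDegree, by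
      have := minpoly.aeval ℂ f'
      rwa [heq, map_pow, aeval_X] at this⟩
  have hchar : f'.charpoly = X ^ finrank ℂ W :=
    (LinearMap.isNilpotent_iff_charpoly f').mp hnil
  have hd : (f' ^ finrank ℂ W) = 0 := by
    have := LinearMap.aeval_self_charpoly f'
    rwa [hchar, map_pow, aeval_X] at this
  have hdn : finrank ℂ W ≤ n := by
    have h1 := Submodule.finrank_le W
    simpa using h1
  have hfn : f' ^ n = 0 := by
    obtain ⟨k, hk⟩ := Nat.exists_eq_add_of_le hdn
    have h2 : f' ^ n = f' ^ finrank ℂ W * f' ^ k := by rw [← pow_add, ← hk]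
    rw [h2, hd, zero_mul]
  have : (f ^ n) x = 0 := by
    have := congrArg Subtype.val (LinearMap.congr_fun hfn ⟨x, hxW⟩)
    rwa [hf', Module.End.pow_restrict, LinearMap.restrict_apply] at this
  rwa [hfpow n] at this
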